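/- A 132-avoiding permutation p of {1,...,n} (n ≥ 1) is indecomposable if and only if p(n) = n. (A permutation p is decomposable if there exists k with 1 ≤ k < n such that p(i) > p(j) for all i ≤ k < j; otherwise p is indecomposable. p avoids 132 if there are no indices i < j < k with p(i) < p(k) < p(j).) -/

import Mathlib

/-- A 132-avoiding permutation of `{1,...,n}` (`n ≥ 1`) is indecomposable
if and only if its last entry is `n` (in 0-indexed form, `p (n-1) = n-1`). -/
theorem avoid132_indecomposable_iff_last (n : ℕ) (hn : 1 ≤ n)
    (p : Equiv.Perm (Fin n))
    (h132 : ∀ i j k : Fin n, i < j → j < k → ¬(p i < p k ∧ p k < p j)) :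
    (¬ ∃ k : ℕ, 1 ≤ k ∧ k < n ∧
        ∀ i j : Fin n, (i : ℕ) < k → k ≤ (j : ℕ) → p j < p i) ↔
      p ⟨n - 1, by omega⟩ = ⟨n - 1, by omega⟩ := by
  constructor
  · intro hind
    by_contra hne
    apply hind
    set top : Fin n := ⟨n - 1, by omega⟩ with htop
    set m : Fin n := p.symm top with hmdef
    have hpm : p m = top := p.apply_symm_apply top
    have hmne : (m : ℕ) ≠ n - 1 := by
      intro h
      apply hne
      have : m = top := Fin.ext h
      rw [this] at hpm; exact hpm
    have hmlt : (m : ℕ) < n - 1 := by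
      have := m.isLt; omega
    refine ⟨(m : ℕ) + 1, by omega, by omega, ?_⟩
    intro i j hi hj
    have hji : j ≠ i := by
      intro h; subst h; omega
    have hpji : p j ≠ p i := fun h => hji (p.injective h)
    have hjm : (m : ℕ) < (j : ℕ) := by omega
    have hjtop : p j ≠ top := by
      intro h
      have : j = m := p.injective (by rw [h, hpm])
      rw [this] at hjm; omega
    have hpj_lt_top : p j < top := by
      have h1 : (p j : ℕ) < n := (p j).isLt
      have h2 : (p j : ℕ) ≠ n - 1 := fun h => hjtop (Fin.ext h)
      exact Fin.lt_def.mpr (by simp only [htop]; omega)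
    rcases eq_or_lt_of_le (Nat.lt_succ_iff.mp hi) with heq | hlt
    · -- i = m
      have : i = m := Fin.ext heq
      rw [this, hpm]
      exact hpj_lt_top
    · -- i < m < j
      by_contra hnot
      have him : i < m := Fin.lt_def.mpr hlt
      have hmj : m < j := Fin.lt_def.mpr hjm
      have hpij : p i < p j := by
        rcases lt_trichotomy (p i) (p j) with h | h | h
        · exact h
        · exact absurd h.symm hpji
        · exact absurd h hnot
      exact h132 i m j him hmj ⟨hpij, by rw [hpm]; exact hpj_lt_top⟩
  · intro hlast ⟨k, hk1, hk2, hdec⟩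
    have := hdec ⟨0, by omega⟩ ⟨n - 1, by omega⟩ (by show 0 < k; omega) (by simp; omega)
    rw [hlast] at this
    have h1 := Fin.lt_def.mp this
    have h2 := (p ⟨0, by omega⟩).isLt
    simp at h1
    omega
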